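/- Let a = (a_{ij}) be a k×k integer matrix with det a ≠ 0, let z = (z₁,…,z_k) ∈ ℂ^k, w = (w₁,…,w_k) ∈ ℂ^k, and let C = (C₁,…,C_k), D = (D₁,…,D_k) ∈ ℤ^k and v = (v₁,…,v_k) ∈ ℂ^k satisfy ∑_{j=1}^k a_{ij}·v_j = C_i·τ + D_i + w_i for all i, with v_j ∉ Λ for every j. Define F(t) = det a · e^{−2πi ∑_{i=1}^k C_i t_i} · ∏_{j=1}^k σ_{v_j}(∑_{i=1}^k t_i a_{ij} − z_j, τ) for t = (t₁,…,t_k) ∈ ℂ^k with ∑_i t_i a_{ij} − z_j ∉ Λ for all j. Then for all integers l₁,m₁,…,l_k,m_k and all such t, F(t₁ + l₁τ + m₁, …, t_k + l_kτ + m_k) = e^{2πi(w₁l₁ + ⋯ + w_k l_k)}·F(t₁,…,t_k). -/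

import Mathlib

open Complex Filter
open scoped Topology

noncomputable section

/-- The lattice `Λ = ℤτ + ℤ ⊂ ℂ` as a set. -/
def Lam (τ : ℂ) : Set ℂ := {c | ∃ l m : ℤ, c = l * τ + m}

/-- The infinite product `(y;q) = ∏_{j=0}^∞ (1 - y qʲ)`. -/
def qPoch (y q : ℂ) : ℂ := ∏' j : ℕ, (1 - y * q ^ j)

/-- The first Jacobi theta function
`θ(z,τ) = i e^{πi(τ/4 - z)} (x;q)(q/x;q)(q;q)`, `q = e^{2πiτ}`, `x = e^{2πiz}`. -/
def theta (z τ : ℂ) : ℂ :=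
  Complex.I * Complex.exp ((Real.pi : ℂ) * Complex.I * (τ / 4 - z)) *
    qPoch (Complex.exp (2 * (Real.pi : ℂ) * Complex.I * z))
      (Complex.exp (2 * (Real.pi : ℂ) * Complex.I * τ)) *
    qPoch (Complex.exp (2 * (Real.pi : ℂ) * Complex.I * τ) /
        Complex.exp (2 * (Real.pi : ℂ) * Complex.I * z))
      (Complex.exp (2 * (Real.pi : ℂ) * Complex.I * τ)) *
    qPoch (Complex.exp (2 * (Real.pi : ℂ) * Complex.I * τ))
      (Complex.exp (2 * (Real.pi : ℂ) * Complex.I * τ))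

/-- `θ'(z,τ)`, the derivative of `θ` in the `z` variable. -/
def thetaD (z τ : ℂ) : ℂ := deriv (fun u => theta u τ) z

/-- `σ_w(t,τ) = θ(w-t,τ)θ'(0,τ)/(θ(w,τ)θ(t,τ))`. -/
def sigmaW (w t τ : ℂ) : ℂ := theta (w - t) τ * thetaD 0 τ / (theta w τ * theta t τ)


lemma multipliable_qPoch {q : ℂ} (hq : ‖q‖ < 1) (y : ℂ) :
    Multipliable (fun j : ℕ => 1 - y * q ^ j) := by
  by_cases hz : ∃ j, 1 - y * q ^ j = 0
  · obtain ⟨j₀, hj₀⟩ := hz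
    refine ⟨0, ?_⟩
    have : ∀ᶠ s : Finset ℕ in atTop, ∏ i ∈ s, (1 - y * q ^ i) = 0 := by
      filter_upwards [Filter.eventually_ge_atTop ({j₀} : Finset ℕ)] with s hs
      exact Finset.prod_eq_zero (hs (Finset.mem_singleton_self j₀)) hj₀
    exact tendsto_const_nhds.congr' (this.mono fun s hs => hs.symm)
  · push_neg at hz
    have hsum : Summable (fun n : ℕ => Complex.log (1 - y * q ^ n)) := by
      have hgeo : Summable (fun n : ℕ => (3/2 : ℝ) * ‖y‖ * ‖q‖ ^ n) :=
        (summable_geometric_of_lt_one (norm_nonneg q) hq).mul_left _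
      refine Summable.of_norm_bounded_eventually_nat hgeo ?_
      have h0 : Tendsto (fun n : ℕ => ‖y * q ^ n‖) atTop (𝓝 0) := by
        have := tendsto_pow_atTop_nhds_zero_of_norm_lt_one hq
        simpa using ((this.const_mul y).norm)
      filter_upwards [h0.eventually_le_const (by norm_num : (0:ℝ) < 1/2)] with n hn
      have h1 : ‖Complex.log (1 + (-(y * q ^ n)))‖ ≤ (3/2) * ‖-(y * q ^ n)‖ :=
        Complex.norm_log_one_add_half_le_self (by simpa using hn)
      calc ‖Complex.log (1 - y * q ^ n)‖ ≤ (3/2) * ‖y * q ^ n‖ := by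
            simpa [sub_eq_add_neg] using h1
        _ = (3/2) * ‖y‖ * ‖q‖ ^ n := by rw [norm_mul, norm_pow]; ring
    exact Complex.multipliable_of_summable_log hsum

set_option maxHeartbeats 1000000 in
lemma qPoch_shift {q : ℂ} (hq : ‖q‖ < 1) (y : ℂ) :
    qPoch y q = (1 - y) * qPoch (y * q) q := by
  have hm : Multipliable (fun n : ℕ => 1 - y * q ^ (n + 1)) :=
    (multipliable_qPoch hq (y * q)).congr fun n => by ring
  have h := tprod_eq_zero_mul' (f := fun j : ℕ => 1 - y * q ^ j) hm
  simp only [pow_zero, mul_one] at h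
  rw [qPoch, h, qPoch]
  congr 1
  exact tprod_congr fun j => by ring

lemma norm_q_lt_one {τ : ℂ} (hτ : 0 < τ.im) :
    ‖Complex.exp (2 * (Real.pi : ℂ) * Complex.I * τ)‖ < 1 := by
  rw [Complex.norm_exp]
  have : (2 * (Real.pi : ℂ) * Complex.I * τ).re = -(2 * Real.pi * τ.im) := by
    simp [Complex.mul_re, Complex.mul_im]
  rw [this, Real.exp_lt_one_iff]
  have := Real.pi_pos
  nlinarith

lemma theta_add_one (z τ : ℂ) : theta (z + 1) τ = - theta z τ := by
  have h1 : Complex.exp (2 * (Real.pi : ℂ) * Complex.I * (z + 1)) =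
      Complex.exp (2 * (Real.pi : ℂ) * Complex.I * z) := by
    rw [show 2 * (Real.pi : ℂ) * Complex.I * (z + 1) =
      2 * (Real.pi : ℂ) * Complex.I * z + 2 * (Real.pi : ℂ) * Complex.I by ring,
      Complex.exp_add, Complex.exp_two_pi_mul_I, mul_one]
  have h2 : Complex.exp ((Real.pi : ℂ) * Complex.I * (τ / 4 - (z + 1))) =
      - Complex.exp ((Real.pi : ℂ) * Complex.I * (τ / 4 - z)) := by
    rw [show (Real.pi : ℂ) * Complex.I * (τ / 4 - (z + 1)) =
      (Real.pi : ℂ) * Complex.I * (τ / 4 - z) + (-((Real.pi : ℂ) * Complex.I)) by ring,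
      Complex.exp_add, Complex.exp_neg, Complex.exp_pi_mul_I]
    field_simp
  unfold theta
  rw [h1, h2]
  ring

lemma theta_add_tau {τ : ℂ} (hτ : 0 < τ.im) (z : ℂ) :
    theta (z + τ) τ = -Complex.exp (-(Real.pi : ℂ) * Complex.I * τ
      - 2 * (Real.pi : ℂ) * Complex.I * z) * theta z τ := by
  set q := Complex.exp (2 * (Real.pi : ℂ) * Complex.I * τ) with hqdef
  set x := Complex.exp (2 * (Real.pi : ℂ) * Complex.I * z) with hxdef
  have hq : ‖q‖ < 1 := norm_q_lt_one hτ
  have hx0 : x ≠ 0 := Complex.exp_ne_zero _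
  have hq0 : q ≠ 0 := Complex.exp_ne_zero _
  have h1 : Complex.exp (2 * (Real.pi : ℂ) * Complex.I * (z + τ)) = x * q := by
    rw [hxdef, hqdef, ← Complex.exp_add]; ring_nf
  have h2 : q / (x * q) = x⁻¹ := by field_simp
  have h3 : Complex.exp ((Real.pi : ℂ) * Complex.I * (τ / 4 - (z + τ))) =
      Complex.exp ((Real.pi : ℂ) * Complex.I * (τ / 4 - z)) *
        Complex.exp (-(Real.pi : ℂ) * Complex.I * τ) := by
    rw [← Complex.exp_add]; ring_nf
  have h4 : qPoch x⁻¹ q = (1 - x⁻¹) * qPoch (q / x) q := by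
    rw [qPoch_shift hq x⁻¹, inv_mul_eq_div]
  have h5 : qPoch x q = (1 - x) * qPoch (x * q) q := qPoch_shift hq x
  have hxinv : x⁻¹ = Complex.exp (-(2 * (Real.pi : ℂ) * Complex.I * z)) := by
    rw [hxdef, ← Complex.exp_neg]
  have key : (1 - x⁻¹) = -Complex.exp (-(2 * (Real.pi : ℂ) * Complex.I * z)) * (1 - x) := by
    rw [← hxinv]
    field_simp
    ring
  unfold theta
  rw [h1, h2, h3, h4, h5]
  rw [show -(Real.pi:ℂ) * Complex.I * τ - 2 * (Real.pi:ℂ) * Complex.I * z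
      = -(Real.pi:ℂ) * Complex.I * τ + -(2 * (Real.pi:ℂ) * Complex.I * z) by ring,
    Complex.exp_add, key]
  ring

lemma theta_add_int (τ : ℂ) (n : ℤ) (z : ℂ) :
    theta (z + n) τ = (-1 : ℂ) ^ n * theta z τ := by
  induction n using Int.induction_on with
  | zero => simp
  | succ n ih =>
      have e1 : (z + (((n : ℤ) + 1 : ℤ) : ℂ)) = (z + ((n : ℤ) : ℂ)) + 1 := by push_cast; ring
      rw [e1, theta_add_one, ih, zpow_add_one₀ (by norm_num : (-1:ℂ) ≠ 0)]
      ring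
  | pred n ih =>
      have e1 : (z + ((-(n:ℤ) - 1 : ℤ) : ℂ)) + 1 = z + ((-(n:ℤ) : ℤ) : ℂ) := by push_cast; ring
      have h := theta_add_one (z + ((-(n:ℤ) - 1 : ℤ) : ℂ)) τ
      rw [e1, ih] at h
      have h2 : theta (z + ((-(n:ℤ) - 1 : ℤ) : ℂ)) τ = -((-1:ℂ) ^ (-(n:ℤ)) * theta z τ) := by
        linear_combination h
      rw [h2, zpow_sub_one₀ (by norm_num : (-1:ℂ) ≠ 0)]
      have : ((-1:ℂ))⁻¹ = -1 := by norm_num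
      rw [this]; ring

lemma theta_add_int_tau {τ : ℂ} (hτ : 0 < τ.im) (l : ℤ) (z : ℂ) :
    theta (z + l * τ) τ = (-1 : ℂ) ^ l *
      Complex.exp (-(Real.pi : ℂ) * Complex.I * l ^ 2 * τ
        - 2 * (Real.pi : ℂ) * Complex.I * l * z) * theta z τ := by
  induction l using Int.induction_on with
  | zero => simp
  | succ n ih =>
      have e1 : z + (((n : ℤ) + 1 : ℤ) : ℂ) * τ = z + ((n : ℤ) : ℂ) * τ + τ := by
        push_cast; ring
      rw [e1, theta_add_tau hτ, ih]
      rw [show (-(Real.pi : ℂ) * Complex.I * (((n:ℤ) + 1 : ℤ) : ℂ) ^ 2 * τ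
          - 2 * (Real.pi : ℂ) * Complex.I * (((n:ℤ) + 1 : ℤ) : ℂ) * z)
        = (-(Real.pi : ℂ) * Complex.I * τ - 2 * (Real.pi : ℂ) * Complex.I * (z + ((n:ℤ):ℂ) * τ))
          + (-(Real.pi : ℂ) * Complex.I * ((n:ℤ):ℂ) ^ 2 * τ
            - 2 * (Real.pi : ℂ) * Complex.I * ((n:ℤ):ℂ) * z) by push_cast; ring,
        Complex.exp_add, zpow_add_one₀ (by norm_num : (-1:ℂ) ≠ 0)]
      ring
  | pred n ih =>
      set u : ℂ := z + ((-(n:ℤ) - 1 : ℤ) : ℂ) * τ with hu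
      have e1 : u + τ = z + ((-(n:ℤ) : ℤ) : ℂ) * τ := by rw [hu]; push_cast; ring
      set s : ℂ := -(Real.pi : ℂ) * Complex.I * τ - 2 * (Real.pi : ℂ) * Complex.I * u with hs
      have hstep : theta (u + τ) τ = -Complex.exp s * theta u τ := theta_add_tau hτ u
      rw [e1, ih] at hstep
      have hinv : Complex.exp (-s) * Complex.exp s = 1 := by
        rw [← Complex.exp_add]; simp
      have h2 : theta u τ = -Complex.exp (-s) * ((-1:ℂ) ^ (-(n:ℤ)) *
          Complex.exp (-(Real.pi : ℂ) * Complex.I * ((-(n:ℤ) : ℤ) : ℂ) ^ 2 * τ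
            - 2 * (Real.pi : ℂ) * Complex.I * ((-(n:ℤ) : ℤ) : ℂ) * z) * theta z τ) := by
        linear_combination Complex.exp (-s) * hstep - theta u τ * hinv
      rw [h2]
      rw [show (-(Real.pi : ℂ) * Complex.I * ((-(n:ℤ) - 1 : ℤ) : ℂ) ^ 2 * τ
          - 2 * (Real.pi : ℂ) * Complex.I * ((-(n:ℤ) - 1 : ℤ) : ℂ) * z)
        = -s + (-(Real.pi : ℂ) * Complex.I * ((-(n:ℤ) : ℤ) : ℂ) ^ 2 * τ
            - 2 * (Real.pi : ℂ) * Complex.I * ((-(n:ℤ) : ℤ) : ℂ) * z) by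
          rw [hs, hu]; push_cast; ring,
        Complex.exp_add, zpow_sub_one₀ (by norm_num : (-1:ℂ) ≠ 0)]
      have : ((-1:ℂ))⁻¹ = -1 := by norm_num
      rw [this]; ring

lemma theta_period {τ : ℂ} (hτ : 0 < τ.im) (l m : ℤ) (z : ℂ) :
    theta (z + l * τ + m) τ = (-1 : ℂ) ^ (l + m) *
      Complex.exp (-(Real.pi : ℂ) * Complex.I * l ^ 2 * τ
        - 2 * (Real.pi : ℂ) * Complex.I * l * z) * theta z τ := by
  rw [theta_add_int, theta_add_int_tau hτ, zpow_add₀ (by norm_num : (-1:ℂ) ≠ 0)]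
  ring



lemma neg_one_zpow_neg (k : ℤ) : ((-1:ℂ)) ^ (-k) = (-1:ℂ) ^ k := by
  rw [zpow_neg]
  exact inv_eq_of_mul_eq_one_left (by rw [← mul_zpow]; norm_num)

lemma sigma_period {τ : ℂ} (hτ : 0 < τ.im) (w t : ℂ) (l m : ℤ) :
    sigmaW w (t + l * τ + m) τ =
      Complex.exp (2 * (Real.pi : ℂ) * Complex.I * l * w) * sigmaW w t τ := by
  unfold sigmaW
  have h1 : w - (t + l * τ + m) = (w - t) + ((-l : ℤ) : ℂ) * τ + ((-m : ℤ) : ℂ) := by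
    push_cast; ring
  rw [h1, theta_period hτ (-l) (-m), theta_period hτ l m]
  set X := theta (w - t) τ
  set Y := theta t τ
  set W := theta w τ
  set T0 := thetaD 0 τ
  set c := Complex.exp (2 * (Real.pi : ℂ) * Complex.I * l * w) with hc
  set K1 := (-1:ℂ) ^ (-l + -m) * Complex.exp (-(Real.pi : ℂ) * Complex.I * ((-l : ℤ) : ℂ) ^ 2 * τ
      - 2 * (Real.pi : ℂ) * Complex.I * ((-l : ℤ) : ℂ) * (w - t)) with hK1
  set K2 := (-1:ℂ) ^ (l + m) * Complex.exp (-(Real.pi : ℂ) * Complex.I * (l : ℂ) ^ 2 * τ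
      - 2 * (Real.pi : ℂ) * Complex.I * (l : ℂ) * t) with hK2
  have hK2ne : K2 ≠ 0 := mul_ne_zero (zpow_ne_zero _ (by norm_num)) (Complex.exp_ne_zero _)
  have hE : Complex.exp (-(Real.pi : ℂ) * Complex.I * ((-l : ℤ) : ℂ) ^ 2 * τ
      - 2 * (Real.pi : ℂ) * Complex.I * ((-l : ℤ) : ℂ) * (w - t)) =
      Complex.exp (2 * (Real.pi : ℂ) * Complex.I * (l : ℂ) * w) *
        Complex.exp (-(Real.pi : ℂ) * Complex.I * (l : ℂ) ^ 2 * τ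
          - 2 * (Real.pi : ℂ) * Complex.I * (l : ℂ) * t) := by
    rw [← Complex.exp_add]
    congr 1
    push_cast
    ring
  have hK : K1 = c * K2 := by
    rw [hK1, hK2, hc, show (-l + -m) = -(l + m) by ring, neg_one_zpow_neg, hE]
    ring
  rw [show K1 * X * T0 = K2 * (c * (X * T0)) from by rw [hK]; ring,
    show W * (K2 * Y) = K2 * (W * Y) from by ring,
    mul_div_mul_left _ _ hK2ne, mul_div_assoc]

/-- The form coefficient `F = ω_v/dt₁∧⋯∧dt_k` is quasi-periodic:
`F(t+γ) = e^{2πi∑wᵢlᵢ} F(t)` for `γ = (l₁τ+m₁,…,l_kτ+m_k) ∈ Λ^k`. -/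
theorem omega_v_descends (τ : ℂ) (hτ : 0 < τ.im)
    (k : ℕ) (a : Matrix (Fin k) (Fin k) ℤ) (ha : a.det ≠ 0)
    (z w : Fin k → ℂ) (C D : Fin k → ℤ) (v : Fin k → ℂ)
    (hv : ∀ i : Fin k, ∑ j, (a i j : ℂ) * v j = (C i : ℂ) * τ + (D i : ℂ) + w i)
    (hvL : ∀ j : Fin k, v j ∉ Lam τ)
    (F : (Fin k → ℂ) → ℂ)
    (hF : ∀ t : Fin k → ℂ, F t =
      (a.det : ℂ) * Complex.exp (-(2 * (Real.pi : ℂ) * Complex.I) * ∑ i, (C i : ℂ) * t i) *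
        ∏ j, sigmaW (v j) ((∑ i, t i * (a i j : ℂ)) - z j) τ)
    (l m : Fin k → ℤ) (t : Fin k → ℂ)
    (ht : ∀ j : Fin k, (∑ i, t i * (a i j : ℂ)) - z j ∉ Lam τ) :
    F (fun i => t i + (l i : ℂ) * τ + (m i : ℂ)) =
      Complex.exp (2 * (Real.pi : ℂ) * Complex.I * ∑ i, w i * (l i : ℂ)) * F t := by
  have hprod : ∀ j : Fin k, (∑ i, (t i + (l i : ℂ) * τ + (m i : ℂ)) * (a i j : ℂ)) - z j
      = ((∑ i, t i * (a i j : ℂ)) - z j) + ((∑ i, l i * a i j : ℤ) : ℂ) * τ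
        + ((∑ i, m i * a i j : ℤ) : ℂ) := by
    intro j
    push_cast
    have e : ∑ i, (t i + (l i : ℂ) * τ + (m i : ℂ)) * (a i j : ℂ)
        = ∑ i, (t i * (a i j : ℂ) + ((l i : ℂ) * (a i j : ℂ)) * τ
          + (m i : ℂ) * (a i j : ℂ)) := Finset.sum_congr rfl fun i _ => by ring
    rw [e, Finset.sum_add_distrib, Finset.sum_add_distrib, ← Finset.sum_mul]
    ring
  simp only [hF]
  have hP : (∏ j, sigmaW (v j) ((∑ i, (t i + (l i : ℂ) * τ + (m i : ℂ)) * (a i j : ℂ)) - z j) τ)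
      = Complex.exp (∑ j, 2 * (Real.pi : ℂ) * Complex.I * ((∑ i, l i * a i j : ℤ) : ℂ) * v j) *
        ∏ j, sigmaW (v j) ((∑ i, t i * (a i j : ℂ)) - z j) τ := by
    calc (∏ j, sigmaW (v j) ((∑ i, (t i + (l i : ℂ) * τ + (m i : ℂ)) * (a i j : ℂ)) - z j) τ)
        = ∏ j, (Complex.exp (2 * (Real.pi : ℂ) * Complex.I * ((∑ i, l i * a i j : ℤ) : ℂ) * v j) *
            sigmaW (v j) ((∑ i, t i * (a i j : ℂ)) - z j) τ) :=
          Finset.prod_congr rfl fun j _ => by rw [hprod j]; exact sigma_period hτ _ _ _ _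
      _ = (∏ j, Complex.exp (2 * (Real.pi : ℂ) * Complex.I * ((∑ i, l i * a i j : ℤ) : ℂ) * v j)) *
            ∏ j, sigmaW (v j) ((∑ i, t i * (a i j : ℂ)) - z j) τ := Finset.prod_mul_distrib
      _ = _ := by rw [Complex.exp_sum]
  rw [hP]
  have hsum : ∑ j, 2 * (Real.pi : ℂ) * Complex.I * ((∑ i, l i * a i j : ℤ) : ℂ) * v j
      = ∑ i, (l i : ℂ) * (2 * (Real.pi : ℂ) * Complex.I * ((C i : ℂ) * τ + (D i : ℂ) + w i)) := by
    have e1 : ∀ j, 2 * (Real.pi : ℂ) * Complex.I * ((∑ i, l i * a i j : ℤ) : ℂ) * v j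
        = ∑ i, (l i : ℂ) * (2 * (Real.pi : ℂ) * Complex.I * ((a i j : ℂ) * v j)) := by
      intro j
      push_cast
      rw [Finset.mul_sum, Finset.sum_mul]
      exact Finset.sum_congr rfl fun i _ => by ring
    calc ∑ j, 2 * (Real.pi : ℂ) * Complex.I * ((∑ i, l i * a i j : ℤ) : ℂ) * v j
        = ∑ j, ∑ i, (l i : ℂ) * (2 * (Real.pi : ℂ) * Complex.I * ((a i j : ℂ) * v j)) :=
          Finset.sum_congr rfl fun j _ => e1 j
      _ = ∑ i, ∑ j, (l i : ℂ) * (2 * (Real.pi : ℂ) * Complex.I * ((a i j : ℂ) * v j)) :=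
          Finset.sum_comm
      _ = ∑ i, (l i : ℂ) * (2 * (Real.pi : ℂ) * Complex.I * (∑ j, (a i j : ℂ) * v j)) :=
          Finset.sum_congr rfl fun i _ => by rw [← Finset.mul_sum, ← Finset.mul_sum]
      _ = _ := Finset.sum_congr rfl fun i _ => by rw [hv i]
  have hN : -(2 * (Real.pi : ℂ) * Complex.I) * (∑ i, (C i : ℂ) * (t i + (l i : ℂ) * τ + (m i : ℂ)))
        + ∑ i, (l i : ℂ) * (2 * (Real.pi : ℂ) * Complex.I * ((C i : ℂ) * τ + (D i : ℂ) + w i))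
      = (2 * (Real.pi : ℂ) * Complex.I * ∑ i, w i * (l i : ℂ)
          + -(2 * (Real.pi : ℂ) * Complex.I) * ∑ i, (C i : ℂ) * t i)
        + ((∑ i, (l i * D i - C i * m i) : ℤ) : ℂ) * (2 * (Real.pi : ℂ) * Complex.I) := by
    push_cast
    simp only [Finset.mul_sum, Finset.sum_mul, sub_mul, Finset.sum_sub_distrib, ← Finset.sum_add_distrib, ← Finset.sum_sub_distrib]
    exact Finset.sum_congr rfl fun i _ => by ring
  have hexp : Complex.exp (-(2 * (Real.pi : ℂ) * Complex.I) *
        ∑ i, (C i : ℂ) * (t i + (l i : ℂ) * τ + (m i : ℂ))) *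
      Complex.exp (∑ j, 2 * (Real.pi : ℂ) * Complex.I * ((∑ i, l i * a i j : ℤ) : ℂ) * v j)
      = Complex.exp (2 * (Real.pi : ℂ) * Complex.I * ∑ i, w i * (l i : ℂ)) *
        Complex.exp (-(2 * (Real.pi : ℂ) * Complex.I) * ∑ i, (C i : ℂ) * t i) := by
    rw [← Complex.exp_add, ← Complex.exp_add, hsum, hN, Complex.exp_add,
      Complex.exp_int_mul_two_pi_mul_I, mul_one]
  linear_combination ((a.det : ℂ) *
    ∏ j, sigmaW (v j) ((∑ i, t i * (a i j : ℂ)) - z j) τ) * hexp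
end
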